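/- Suppose J(z) = μ(|z|) with μ strictly decreasing on [0, r] and vanishing outside, Ω measurable, and x₀, x̃₀ = R₀(x₀) with x_{0,n} < 0 < x̃_{0,n}. If every y ∈ Ω \ R₀(Ω) lies in the upper half-space {y_n > 0}, and H^J_Ω(x₀) = H^J_Ω(x̃₀), then |((Ω \ R₀(Ω)) ∩ B_r(x̃₀)| = 0. -/

import Mathlib

open MeasureTheory Set Metric

/-- The nonlocal curvature of a set `Ω` with kernel `J` at a point `x`. -/
noncomputable def nonlocalCurvature {n : ℕ} (J : EuclideanSpace ℝ (Fin n) → ℝ)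
    (Ω : Set (EuclideanSpace ℝ (Fin n))) (x : EuclideanSpace ℝ (Fin n)) : ℝ :=
  ∫ y, J (x - y) * (Set.indicator Ωᶜ (fun _ => (1 : ℝ)) y - Set.indicator Ω (fun _ => (1 : ℝ)) y)

/-- Reflection of `ℝ^{n+1}` across the hyperplane `{x_n = 0}` (the last coordinate). -/
noncomputable def reflectZero {n : ℕ} (x : EuclideanSpace ℝ (Fin (n + 1))) :
    EuclideanSpace ℝ (Fin (n + 1)) :=
  WithLp.toLp 2 (Function.update x (Fin.last n) (-(x (Fin.last n))))

lemma reflectZero_apply {n : ℕ} (x : EuclideanSpace ℝ (Fin (n + 1))) (j : Fin (n + 1)) :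
    reflectZero x j = if j = Fin.last n then -(x (Fin.last n)) else x j :=
  Function.update_apply x.ofLp (Fin.last n) (-(x (Fin.last n))) j

lemma reflectZero_involutive {n : ℕ} :
    Function.Involutive (reflectZero : EuclideanSpace ℝ (Fin (n + 1)) → _) := by
  intro x
  ext j
  by_cases h : j = Fin.last n
  · subst h; simp [reflectZero_apply]
  · simp [reflectZero_apply, h]

/-- The reflection as a linear map. -/
noncomputable def reflLM (n : ℕ) :
    EuclideanSpace ℝ (Fin (n + 1)) →ₗ[ℝ] EuclideanSpace ℝ (Fin (n + 1)) where
  toFun x := WithLp.toLp 2 (fun j => if j = Fin.last n then -(x j) else x j)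
  map_add' x y := by
    ext j
    by_cases h : j = Fin.last n <;> simp [h, PiLp.add_apply] <;> ring
  map_smul' c x := by
    ext j
    by_cases h : j = Fin.last n <;> simp [h, PiLp.smul_apply] <;> ring

lemma reflLM_eq {n : ℕ} (x : EuclideanSpace ℝ (Fin (n + 1))) :
    reflLM n x = reflectZero x := by
  ext j
  by_cases h : j = Fin.last n
  · subst h; simp [reflLM, reflectZero_apply]
  · simp [reflLM, reflectZero_apply, h]

/-- The reflection as a linear isometry equivalence. -/
noncomputable def reflE (n : ℕ) :
    EuclideanSpace ℝ (Fin (n + 1)) ≃ₗᵢ[ℝ] EuclideanSpace ℝ (Fin (n + 1)) :=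
  { LinearEquiv.ofInvolutive (reflLM n)
      (by intro x; rw [reflLM_eq, reflLM_eq]; exact reflectZero_involutive x) with
    norm_map' := by
      intro x
      rw [EuclideanSpace.norm_eq, EuclideanSpace.norm_eq]
      congr 1
      refine Finset.sum_congr rfl fun j _ => ?_
      show ‖(reflLM n x) j‖ ^ 2 = _
      by_cases h : j = Fin.last n <;> simp [reflLM, h] }

lemma reflE_eq {n : ℕ} (x : EuclideanSpace ℝ (Fin (n + 1))) :
    reflE n x = reflectZero x := reflLM_eq x

lemma reflectZero_norm {n : ℕ} (x : EuclideanSpace ℝ (Fin (n + 1))) :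
    ‖reflectZero x‖ = ‖x‖ := by
  rw [← reflE_eq]; exact (reflE n).norm_map x

lemma reflectZero_sub {n : ℕ} (a b : EuclideanSpace ℝ (Fin (n + 1))) :
    reflectZero (a - b) = reflectZero a - reflectZero b := by
  rw [← reflLM_eq, ← reflLM_eq, ← reflLM_eq, map_sub]

lemma reflectZero_norm_sub {n : ℕ} (a b : EuclideanSpace ℝ (Fin (n + 1))) :
    ‖a - reflectZero b‖ = ‖reflectZero a - b‖ := by
  calc ‖a - reflectZero b‖ = ‖reflectZero (a - reflectZero b)‖ := (reflectZero_norm _).symm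
    _ = ‖reflectZero a - b‖ := by rw [reflectZero_sub, reflectZero_involutive b]

lemma reflectZero_measurePreserving {n : ℕ} :
    MeasurePreserving (reflectZero : EuclideanSpace ℝ (Fin (n + 1)) → _) volume volume := by
  have h : ⇑(reflE n) = (reflectZero : EuclideanSpace ℝ (Fin (n + 1)) → _) := funext reflE_eq
  have := (reflE n).measurePreserving
  rwa [h] at this

lemma reflectZero_norm_lt {n : ℕ} (x₀ y : EuclideanSpace ℝ (Fin (n + 1)))
    (hx : x₀ (Fin.last n) < 0) (hy : 0 < y (Fin.last n)) :
    ‖reflectZero x₀ - y‖ < ‖x₀ - y‖ := by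
  rw [EuclideanSpace.norm_eq, EuclideanSpace.norm_eq]
  apply Real.sqrt_lt_sqrt
  · positivity
  · apply Finset.sum_lt_sum
    · intro j _
      by_cases h : j = Fin.last n <;>
        simp only [PiLp.sub_apply, reflectZero_apply, h, if_true, if_false,
          Real.norm_eq_abs, sq_abs, le_refl]
      subst h
      nlinarith [mul_neg_of_neg_of_pos hx hy]
    · refine ⟨Fin.last n, Finset.mem_univ _, ?_⟩
      simp only [PiLp.sub_apply, reflectZero_apply, if_true, Real.norm_eq_abs, sq_abs]
      nlinarith [mul_neg_of_neg_of_pos hx hy]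

theorem reflected_difference_null_strict_kernel
    {n : ℕ} (r : ℝ) (hr : 0 < r) (μ : ℝ → ℝ)
    (hμstrict : StrictAntiOn μ (Set.Icc 0 r)) (hμzero : ∀ s, r ≤ s → μ s = 0)
    (J : EuclideanSpace ℝ (Fin (n + 1)) → ℝ) (hJ : ∀ z, J z = μ ‖z‖) (hJint : Integrable J)
    (Ω : Set (EuclideanSpace ℝ (Fin (n + 1)))) (hΩ : MeasurableSet Ω)
    (hfin : volume Ω ≠ ⊤) (hbd : volume (frontier Ω) = 0)
    (x₀ xt₀ : EuclideanSpace ℝ (Fin (n + 1))) (hxt : xt₀ = reflectZero x₀)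
    (hx₀ : x₀ (Fin.last n) < 0)
    (hupper : ∀ y ∈ Ω \ (reflectZero '' Ω), 0 < y (Fin.last n))
    (hH : nonlocalCurvature J Ω x₀ = nonlocalCurvature J Ω xt₀) :
    volume ((Ω \ (reflectZero '' Ω)) ∩ ball xt₀ r) = 0 := by
  have hRinv : Function.Involutive (reflectZero : EuclideanSpace ℝ (Fin (n + 1)) → _) :=
    reflectZero_involutive
  have hMP : MeasurePreserving (reflectZero : EuclideanSpace ℝ (Fin (n + 1)) → _)
      volume volume := reflectZero_measurePreserving
  have hRmeas : Measurable (reflectZero : EuclideanSpace ℝ (Fin (n + 1)) → _) := hMP.measurable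
  have hEmb : MeasurableEmbedding (reflectZero : EuclideanSpace ℝ (Fin (n + 1)) → _) :=
    (MeasurableEquiv.ofInvolutive reflectZero hRinv hRmeas).measurableEmbedding
  have hchg : ∀ φ : EuclideanSpace ℝ (Fin (n + 1)) → ℝ,
      ∫ y, φ y = ∫ y, φ (reflectZero y) := fun φ => (hMP.integral_comp hEmb φ).symm
  set Ω' : Set (EuclideanSpace ℝ (Fin (n + 1))) := reflectZero '' Ω with hΩ'def
  have himg : Ω' = reflectZero ⁻¹' Ω :=
    congrFun (Set.image_eq_preimage_of_inverse hRinv.leftInverse hRinv.rightInverse) Ω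
  have hΩ'm : MeasurableSet Ω' := himg ▸ hRmeas hΩ
  have hmem1 : ∀ y : EuclideanSpace ℝ (Fin (n + 1)), reflectZero y ∈ Ω ↔ y ∈ Ω' :=
    fun y => by rw [himg]; exact Iff.rfl
  have hmem2 : ∀ y : EuclideanSpace ℝ (Fin (n + 1)), reflectZero y ∈ Ω' ↔ y ∈ Ω := fun y => by
    rw [himg]; show reflectZero (reflectZero y) ∈ Ω ↔ _; rw [hRinv y]
  set S : Set (EuclideanSpace ℝ (Fin (n + 1))) := Ω \ Ω' with hSdef
  set A : Set (EuclideanSpace ℝ (Fin (n + 1))) := Ω' \ Ω with hAdef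
  have hSm : MeasurableSet S := hΩ.diff hΩ'm
  have hAm : MeasurableSet A := hΩ'm.diff hΩ
  have hRxt : reflectZero xt₀ = x₀ := by rw [hxt]; exact hRinv x₀
  set f : EuclideanSpace ℝ (Fin (n + 1)) → ℝ := fun y =>
    Set.indicator Ωᶜ (fun _ => (1 : ℝ)) y - Set.indicator Ω (fun _ => (1 : ℝ)) y with hfdef
  set f' : EuclideanSpace ℝ (Fin (n + 1)) → ℝ := fun y =>
    Set.indicator Ω'ᶜ (fun _ => (1 : ℝ)) y - Set.indicator Ω' (fun _ => (1 : ℝ)) y with hf'def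
  have hJt : Integrable (fun y => J (xt₀ - y)) := hJint.comp_sub_left xt₀
  have hJ0 : Integrable (fun y => J (x₀ - y)) := hJint.comp_sub_left x₀
  have hfm : AEStronglyMeasurable f volume :=
    ((measurable_const.indicator hΩ.compl).sub
      (measurable_const.indicator hΩ)).aestronglyMeasurable
  have hf'm : AEStronglyMeasurable f' volume :=
    ((measurable_const.indicator hΩ'm.compl).sub
      (measurable_const.indicator hΩ'm)).aestronglyMeasurable
  have hfbd : ∀ y, ‖f y‖ ≤ 2 := by
    intro y
    by_cases h : y ∈ Ω <;>
      simp [hfdef, Set.indicator_apply, h] <;> norm_num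
  have hf'bd : ∀ y, ‖f' y‖ ≤ 2 := by
    intro y
    by_cases h : y ∈ Ω' <;>
      simp [hf'def, Set.indicator_apply, h] <;> norm_num
  have hint1 : Integrable (fun y => J (xt₀ - y) * f y) := by
    simpa [mul_comm] using hJt.bdd_mul hfm (Filter.Eventually.of_forall hfbd)
  have hint2 : Integrable (fun y => J (xt₀ - y) * f' y) := by
    simpa [mul_comm] using hJt.bdd_mul hf'm (Filter.Eventually.of_forall hf'bd)
  have step2 : ∫ y, J (x₀ - y) * f y = ∫ y, J (xt₀ - y) * f' y := by
    rw [hchg (fun y => J (x₀ - y) * f y)]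
    refine integral_congr_ae (Filter.Eventually.of_forall fun y => ?_)
    have hval : J (x₀ - reflectZero y) = J (xt₀ - y) := by
      rw [hJ, hJ, reflectZero_norm_sub, ← hxt]
    have hfv : f (reflectZero y) = f' y := by
      by_cases h : y ∈ Ω' <;>
        simp [hfdef, hf'def, Set.indicator_apply, hmem1 y, h]
    simp only [hval, hfv]
  have hE : ∫ y, J (xt₀ - y) * f y = ∫ y, J (xt₀ - y) * f' y := by
    have hH' : ∫ y, J (x₀ - y) * f y = ∫ y, J (xt₀ - y) * f y := hH
    rw [← hH', step2]
  have h0 : ∫ y, (J (xt₀ - y) * f y - J (xt₀ - y) * f' y) = 0 := by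
    rw [integral_sub hint1 hint2, hE, sub_self]
  have hpt : ∀ y, J (xt₀ - y) * f y - J (xt₀ - y) * f' y =
      2 * Set.indicator A (fun z => J (xt₀ - z)) y
        - 2 * Set.indicator S (fun z => J (xt₀ - z)) y := by
    intro y
    by_cases h1 : y ∈ Ω <;> by_cases h2 : y ∈ Ω' <;>
      simp [hfdef, hf'def, hAdef, hSdef, Set.indicator_apply, h1, h2, Set.mem_diff] <;> ring
  have hIA : Integrable (Set.indicator A (fun z => J (xt₀ - z))) := hJt.indicator hAm
  have hIS : Integrable (Set.indicator S (fun z => J (xt₀ - z))) := hJt.indicator hSm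
  have h0' : ∫ y, (2 * Set.indicator A (fun z => J (xt₀ - z)) y
      - 2 * Set.indicator S (fun z => J (xt₀ - z)) y) = 0 :=
    (integral_congr_ae (Filter.Eventually.of_forall hpt)).symm.trans h0
  rw [integral_sub (hIA.const_mul 2) (hIS.const_mul 2), integral_const_mul,
    integral_const_mul] at h0'
  have h1 : ∫ y, Set.indicator A (fun z => J (xt₀ - z)) y
      = ∫ y, Set.indicator S (fun z => J (xt₀ - z)) y := by linarith
  have h2 : ∫ y, Set.indicator A (fun z => J (xt₀ - z)) y
      = ∫ y, Set.indicator S (fun z => J (x₀ - z)) y := by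
    rw [hchg (fun y => Set.indicator A (fun z => J (xt₀ - z)) y)]
    refine integral_congr_ae (Filter.Eventually.of_forall fun y => ?_)
    have hval : J (xt₀ - reflectZero y) = J (x₀ - y) := by
      rw [hJ, hJ, reflectZero_norm_sub, hRxt]
    have hmemA : reflectZero y ∈ A ↔ y ∈ S := by
      simp [hAdef, hSdef, Set.mem_diff, hmem1 y, hmem2 y]
    by_cases h : y ∈ S <;>
      simp [Set.indicator_apply, hmemA, h, hval]
  have h3 : ∫ y in S, (J (xt₀ - y) - J (x₀ - y)) = 0 := by
    rw [integral_sub hJt.integrableOn hJ0.integrableOn,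
      ← integral_indicator hSm, ← integral_indicator hSm, ← h1, h2, sub_self]
  have hmu' : ∀ s t : ℝ, 0 ≤ s → s < t → s < r → μ t < μ s := by
    intro s t hs0 hst hsr
    rcases le_or_gt t r with htr | hrt
    · exact hμstrict ⟨hs0, hsr.le⟩ ⟨le_trans hs0 hst.le, htr⟩ hst
    · rw [hμzero t hrt.le]
      have := hμstrict ⟨hs0, hsr.le⟩ ⟨hr.le, le_refl r⟩ hsr
      rwa [hμzero r (le_refl r)] at this
  have hmu : ∀ s t : ℝ, 0 ≤ s → s < t → μ t ≤ μ s := by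
    intro s t hs0 hst
    rcases le_or_gt r s with hrs | hsr
    · rw [hμzero s hrs, hμzero t (hrs.trans hst.le)]
    · exact (hmu' s t hs0 hst hsr).le
  have hlt : ∀ y ∈ S, ‖xt₀ - y‖ < ‖x₀ - y‖ := by
    intro y hy
    rw [hxt]
    exact reflectZero_norm_lt x₀ y hx₀ (hupper y hy)
  have hnonneg : ∀ y ∈ S, 0 ≤ J (xt₀ - y) - J (x₀ - y) := by
    intro y hy
    rw [hJ, hJ, sub_nonneg]
    exact hmu _ _ (norm_nonneg _) (hlt y hy)
  have hpos : ∀ y ∈ S, y ∈ ball xt₀ r → 0 < J (xt₀ - y) - J (x₀ - y) := by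
    intro y hy hyb
    rw [hJ, hJ, sub_pos]
    have hsr : ‖xt₀ - y‖ < r := by
      rw [← dist_eq_norm, dist_comm]
      exact mem_ball.mp hyb
    exact hmu' _ _ (norm_nonneg _) (hlt y hy) hsr
  have haenn : 0 ≤ᵐ[volume.restrict S] fun y => J (xt₀ - y) - J (x₀ - y) :=
    (ae_restrict_iff' hSm).2 (Filter.Eventually.of_forall fun y hy => hnonneg y hy)
  have hIOn : IntegrableOn (fun y => J (xt₀ - y) - J (x₀ - y)) S volume :=
    (hJt.sub hJ0).integrableOn
  have hae : (fun y => J (xt₀ - y) - J (x₀ - y)) =ᵐ[volume.restrict S] 0 :=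
    (setIntegral_eq_zero_iff_of_nonneg_ae haenn hIOn).mp h3
  have hnull : volume.restrict S {y | ¬ (J (xt₀ - y) - J (x₀ - y) = 0)} = 0 := hae
  have hsub : S ∩ ball xt₀ r ⊆ {y | ¬ (J (xt₀ - y) - J (x₀ - y) = 0)} :=
    fun y hy => (hpos y hy.1 hy.2).ne'
  have hres : volume.restrict S (S ∩ ball xt₀ r) = 0 := measure_mono_null hsub hnull
  rw [Measure.restrict_apply (hSm.inter measurableSet_ball)] at hres
  rwa [Set.inter_eq_left.mpr Set.inter_subset_left] at hres
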